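/- For every real α and all strict partitions μ and λ with |μ| = k and |λ| = n ≥ k, the following combinatorial identity for the path-counting function h(·,·) of the Schur graph holds: Σ_{x∈X(λ)} (x(x+1)+α) · h(μ, λ+□(x)) = 2(n+k+α/2)(n−k+1) · h(μ, λ) + Σ_{y∈Y(μ)} (y(y+1)+α) · h(μ−□(y), λ). -/

import Mathlib

open Finset

/-- A strict partition is encoded as the finite set of its (distinct, positive) parts:
`S` is a strict partition iff `0 ∉ S`. -/
def IsStrictPartition (S : Finset ℕ) : Prop := 0 ∉ S

/-- The weight `|λ|` of a strict partition: the sum of its parts. -/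
def wt (S : Finset ℕ) : ℕ := ∑ a ∈ S, a

/-- The length `ℓ(λ)` of a strict partition: its number of parts. -/
def len (S : Finset ℕ) : ℕ := S.card

/-- The set `X(λ)` of addable contents of the strict partition `λ`:
the contents `x` of boxes that can be added to the shifted Young diagram.
A part `a ∈ S` gives the addable content `a` iff `a + 1` is not a part, and `0` is an
addable content iff `1` is not a part (i.e. `λ` is empty or its smallest part is `≥ 2`). -/
def Xset (S : Finset ℕ) : Finset ℕ :=
  (S.filter (fun x => x + 1 ∉ S)) ∪ (if 1 ∉ S then {0} else ∅)

/-- The set `Y(λ)` of removable contents of the strict partition `λ`: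
`y ∈ Y(λ)` iff `y + 1` is a part and `y` is not a part. -/
def Yset (S : Finset ℕ) : Finset ℕ :=
  (S.filter (fun p => p - 1 ∉ S)).image (fun p => p - 1)

/-- `λ + □(x)`: add to `λ` the box of content `x ∈ X(λ)`. -/
def addBox (S : Finset ℕ) (x : ℕ) : Finset ℕ :=
  if x = 0 then insert 1 S else insert (x + 1) (S.erase x)

/-- `λ − □(y)`: remove from `λ` the box of content `y ∈ Y(λ)`. -/
def removeBox (S : Finset ℕ) (y : ℕ) : Finset ℕ :=
  if y = 0 then S.erase 1 else insert y (S.erase (y + 1))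

/-- `c(c+1)` as a real number. -/
def cc (t : ℕ) : ℝ := t * (t + 1)

/-- The number `h(λ)` of standard shifted tableaux (with the doubled-edge convention):
`h(λ) = 2^{|λ|−ℓ(λ)} |λ|!/(λ_1!⋯λ_ℓ!) ∏_{i<j} (λ_i−λ_j)/(λ_i+λ_j)`. -/
noncomputable def hfun (S : Finset ℕ) : ℝ :=
  2 ^ (wt S - len S) * (Nat.factorial (wt S) : ℝ) / (∏ a ∈ S, (Nat.factorial a : ℝ)) *
    ∏ p ∈ S.offDiag.filter (fun p => p.2 < p.1), (((p.1 : ℝ) - p.2) / ((p.1 : ℝ) + p.2))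

/-- The partial fraction coefficients `θ↑_x(λ)`, `x ∈ X(λ)`. -/
noncomputable def thetaUp (S : Finset ℕ) (xh : ℕ) : ℝ :=
  if xh = 0 then (∏ y ∈ Yset S, cc y) / (∏ x ∈ (Xset S).erase 0, cc x)
  else (∏ y ∈ Yset S, (cc xh - cc y)) /
    (cc xh * ∏ x ∈ ((Xset S).erase 0).erase xh, (cc xh - cc x))

/-- The partial fraction coefficients `θ↓_y(λ)`, `y ∈ Y(λ)`. -/
noncomputable def thetaDown (S : Finset ℕ) (yh : ℕ) : ℝ :=
  (∏ x ∈ (Xset S).erase 0, (cc yh - cc x)) / (∏ y ∈ (Yset S).erase yh, (cc yh - cc y))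

/-- `Z_α(n) = α(α+2)⋯(α+2n−2)`. -/
noncomputable def Zfun (α : ℝ) (n : ℕ) : ℝ := ∏ k ∈ Finset.range n, (α + 2 * k)

/-- The multiplicative measure weight
`M_n^α(λ) = (h(λ)² 2^{ℓ−n}/n!) ⬝ ∏_{□∈λ}(c(□)(c(□)+1)+α) / Z_α(n)`. -/
noncomputable def Mw (α : ℝ) (n : ℕ) (S : Finset ℕ) : ℝ :=
  hfun S ^ 2 * 2 ^ len S / 2 ^ n / (Nat.factorial n : ℝ) *
    (∏ p ∈ S, ∏ c ∈ Finset.range p, (cc c + α)) / Zfun α n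

lemma mem_Xset {S : Finset ℕ} {x : ℕ} :
    x ∈ Xset S ↔ (x ∈ S ∧ x + 1 ∉ S) ∨ (x = 0 ∧ 1 ∉ S) := by
  unfold Xset
  by_cases h1 : 1 ∈ S <;> simp [h1, mem_filter] <;> tauto

lemma mem_Yset {S : Finset ℕ} (h0 : 0 ∉ S) {y : ℕ} :
    y ∈ Yset S ↔ y + 1 ∈ S ∧ y ∉ S := by
  unfold Yset
  simp only [mem_image, mem_filter]
  constructor
  · rintro ⟨p, ⟨hp, hp'⟩, rfl⟩
    have : p ≠ 0 := fun h => h0 (h ▸ hp)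
    constructor
    · have : p - 1 + 1 = p := by omega
      rwa [this]
    · exact hp'
  · rintro ⟨h1, h2⟩
    exact ⟨y + 1, ⟨h1, by simpa using h2⟩, by simp⟩

section SetLemmas
variable {S : Finset ℕ} {x y z : ℕ}

lemma mem_addBox (h0 : 0 ∉ S) (hx : x ∈ Xset S) {a : ℕ} :
    a ∈ addBox S x ↔ (a ∈ S ∧ a ≠ x) ∨ a = x + 1 := by
  rcases mem_Xset.1 hx with ⟨hxS, hx1⟩ | ⟨rfl, h1⟩
  · have : x ≠ 0 := fun h => h0 (h ▸ hxS)
    unfold addBox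
    simp [this, Finset.mem_insert, Finset.mem_erase]
    tauto
  · unfold addBox
    simp [Finset.mem_insert]
    constructor
    · rintro (rfl | haS)
      · right; rfl
      · left; exact ⟨haS, fun h => h0 (h ▸ haS)⟩
    · tauto

lemma mem_removeBox (h0 : 0 ∉ S) (hy : y ∈ Yset S) {a : ℕ} :
    a ∈ removeBox S y ↔ (a ∈ S ∧ a ≠ y + 1) ∨ (a = y ∧ y ≠ 0) := by
  obtain ⟨hy1, hyS⟩ := (mem_Yset h0).1 hy
  unfold removeBox
  by_cases hy0 : y = 0
  · subst hy0
    simp [Finset.mem_erase]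
    tauto
  · simp [hy0, Finset.mem_insert, Finset.mem_erase]
    tauto

lemma strict_addBox (h0 : 0 ∉ S) (hx : x ∈ Xset S) : (0 : ℕ) ∉ addBox S x := by
  rw [mem_addBox h0 hx]; rintro (⟨h, -⟩ | h) <;> simp_all

lemma strict_removeBox (h0 : 0 ∉ S) (hy : y ∈ Yset S) : (0 : ℕ) ∉ removeBox S y := by
  rw [mem_removeBox h0 hy]; rintro (⟨h, -⟩ | ⟨h, hne⟩) <;> simp_all

lemma succ_mem_addBox (h0 : 0 ∉ S) (hx : x ∈ Xset S) : x + 1 ∈ addBox S x := by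
  rw [mem_addBox h0 hx]; right; rfl

lemma succ_not_mem (hx : x ∈ Xset S) : x + 1 ∉ S := by
  rcases mem_Xset.1 hx with ⟨-, h⟩ | ⟨rfl, h⟩ <;> simpa using h

lemma addBox_inj (h0 : 0 ∉ S) (hx : x ∈ Xset S) (hz : z ∈ Xset S)
    (he : addBox S x = addBox S z) : x = z := by
  have h1 := succ_mem_addBox h0 hx
  rw [he, mem_addBox h0 hz] at h1
  rcases h1 with ⟨hmem, -⟩ | h
  · exact absurd hmem (succ_not_mem hx)
  · omega

lemma mem_Yset_addBox (h0 : 0 ∉ S) (hx : x ∈ Xset S) : x ∈ Yset (addBox S x) := by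
  rw [mem_Yset (strict_addBox h0 hx)]
  refine ⟨succ_mem_addBox h0 hx, ?_⟩
  rw [mem_addBox h0 hx]
  rintro (⟨-, h⟩ | h) <;> omega

lemma removeBox_addBox (h0 : 0 ∉ S) (hx : x ∈ Xset S) :
    removeBox (addBox S x) x = S := by
  ext a
  rw [mem_removeBox (strict_addBox h0 hx) (mem_Yset_addBox h0 hx),
    mem_addBox h0 hx]
  have hx1 := succ_not_mem hx
  rcases mem_Xset.1 hx with ⟨hxS, -⟩ | ⟨rfl, -⟩
  · constructor
    · rintro (⟨(⟨h, -⟩ | rfl), hne⟩ | ⟨rfl, -⟩) <;> tauto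
    · intro haS
      by_cases hax : a = x
      · subst hax
        right; exact ⟨rfl, fun h => h0 (h ▸ haS)⟩
      · left; exact ⟨Or.inl ⟨haS, hax⟩, fun h => hx1 (h ▸ haS)⟩
  · constructor
    · rintro (⟨(⟨h, -⟩ | rfl), hne⟩ | ⟨rfl, h⟩) <;> first | assumption | omega
    · intro haS
      left
      exact ⟨Or.inl ⟨haS, fun h => h0 (h ▸ haS)⟩, fun h => hx1 (h ▸ haS)⟩

lemma mem_Xset_removeBox (h0 : 0 ∉ S) (hy : y ∈ Yset S) : y ∈ Xset (removeBox S y) := by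
  obtain ⟨hy1, hyS⟩ := (mem_Yset h0).1 hy
  rw [mem_Xset]
  by_cases hy0 : y = 0
  · subst hy0
    right
    refine ⟨rfl, ?_⟩
    rw [mem_removeBox h0 hy]
    rintro (⟨-, h⟩ | ⟨h, hne⟩) <;> omega
  · left
    constructor
    · rw [mem_removeBox h0 hy]; right; exact ⟨rfl, hy0⟩
    · rw [mem_removeBox h0 hy]; rintro (⟨h, h2⟩ | ⟨h, -⟩) <;> omega

lemma addBox_removeBox (h0 : 0 ∉ S) (hy : y ∈ Yset S) :
    addBox (removeBox S y) y = S := by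
  obtain ⟨hy1, hyS⟩ := (mem_Yset h0).1 hy
  ext a
  rw [mem_addBox (strict_removeBox h0 hy) (mem_Xset_removeBox h0 hy),
    mem_removeBox h0 hy]
  constructor
  · rintro (⟨(⟨h, -⟩ | ⟨rfl, -⟩), hne⟩ | rfl) <;> first | assumption | tauto
  · intro haS
    by_cases hay : a = y + 1
    · right; exact hay
    · left
      exact ⟨Or.inl ⟨haS, hay⟩, fun h => hyS (h ▸ haS)⟩

end SetLemmas

section Diamond
variable {S : Finset ℕ} {x z : ℕ}

lemma diamond_fwd (h0 : 0 ∉ S) (hx : x ∈ Xset S) (hz : z ∈ Yset (addBox S x))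
    (hzx : z ≠ x) :
    z ∈ Yset S ∧ x ∈ Xset (removeBox S z) ∧
      removeBox (addBox S x) z = addBox (removeBox S z) x := by
  obtain ⟨hz1, hzT⟩ := (mem_Yset (strict_addBox h0 hx)).1 hz
  rw [mem_addBox h0 hx] at hz1
  have hz1S : z + 1 ∈ S ∧ z + 1 ≠ x := by rcases hz1 with h | h; exact h; omega
  have hzS : z ∉ S := fun h => hzT ((mem_addBox h0 hx).2 (Or.inl ⟨h, hzx⟩))
  have hzx1 : z ≠ x + 1 := fun h => hzT ((mem_addBox h0 hx).2 (Or.inr h))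
  have hzY : z ∈ Yset S := (mem_Yset h0).2 ⟨hz1S.1, hzS⟩
  have hxX : x ∈ Xset (removeBox S z) := by
    rw [mem_Xset]
    rcases mem_Xset.1 hx with ⟨hxS, hx1⟩ | ⟨rfl, h1⟩
    · left
      constructor
      · rw [mem_removeBox h0 hzY]; left; exact ⟨hxS, fun h => hz1S.2 h.symm⟩
      · rw [mem_removeBox h0 hzY]; rintro (⟨h, -⟩ | ⟨h, -⟩)
        · exact hx1 h
        · exact hzx1 h.symm
    · right
      refine ⟨rfl, ?_⟩
      rw [mem_removeBox h0 hzY]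
      rintro (⟨h, -⟩ | ⟨h, -⟩)
      · exact h1 h
      · exact hzx1 h.symm
  refine ⟨hzY, hxX, ?_⟩
  ext a
  rw [mem_removeBox (strict_addBox h0 hx) hz, mem_addBox h0 hx,
    mem_addBox (strict_removeBox h0 hzY) hxX, mem_removeBox h0 hzY]
  have := hz1S.2
  constructor
  · rintro (⟨(⟨h1, h2⟩ | rfl), hne⟩ | ⟨rfl, h⟩)
    · exact Or.inl ⟨Or.inl ⟨h1, hne⟩, h2⟩
    · exact Or.inr rfl
    · exact Or.inl ⟨Or.inr ⟨rfl, h⟩, hzx⟩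
  · rintro (⟨(⟨h1, h2⟩ | ⟨rfl, h⟩), hne⟩ | rfl)
    · exact Or.inl ⟨Or.inl ⟨h1, hne⟩, h2⟩
    · exact Or.inr ⟨rfl, h⟩
    · exact Or.inl ⟨Or.inr rfl, by omega⟩

lemma diamond_bwd (h0 : 0 ∉ S) (hz : z ∈ Yset S) (hx : x ∈ Xset (removeBox S z))
    (hxz : x ≠ z) :
    x ∈ Xset S ∧ z ∈ Yset (addBox S x) := by
  obtain ⟨hz1, hzS⟩ := (mem_Yset h0).1 hz
  have hxX : x ∈ Xset S := by
    rw [mem_Xset]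
    rcases mem_Xset.1 hx with ⟨hxR, hx1⟩ | ⟨rfl, h1⟩
    · rw [mem_removeBox h0 hz] at hxR
      rcases hxR with ⟨hxS, hxz1⟩ | ⟨rfl, -⟩
      · left
        refine ⟨hxS, fun hx1S => ?_⟩
        apply hx1
        rw [mem_removeBox h0 hz]
        left
        exact ⟨hx1S, by omega⟩
      · exact absurd rfl hxz
    · right
      refine ⟨rfl, fun h1S => ?_⟩
      apply h1
      rw [mem_removeBox h0 hz]
      left
      refine ⟨h1S, fun h => ?_⟩
      exact hxz (by omega)
  refine ⟨hxX, (mem_Yset (strict_addBox h0 hxX)).2 ⟨?_, ?_⟩⟩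
  · rw [mem_addBox h0 hxX]
    left
    refine ⟨hz1, fun h => ?_⟩
    · subst h
      rcases mem_Xset.1 hx with ⟨hxR, -⟩ | ⟨h', -⟩
      · rw [mem_removeBox h0 hz] at hxR
        rcases hxR with ⟨-, h⟩ | ⟨h, -⟩ <;> omega
      · omega
  · rw [mem_addBox h0 hxX]
    rintro (⟨h, -⟩ | h)
    · exact hzS h
    · subst h
      rcases mem_Xset.1 hx with ⟨-, hx1⟩ | ⟨h', hmem⟩
      · apply hx1
        rw [mem_removeBox h0 hz]
        right
        exact ⟨rfl, by omega⟩
      · apply hmem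
        rw [mem_removeBox h0 hz]
        right
        omega

lemma removeBox_inj {y : ℕ} (h0 : 0 ∉ S) (hy : y ∈ Yset S) (hz : z ∈ Yset S)
    (he : removeBox S y = removeBox S z) : y = z := by
  have h1 : y + 1 ∉ removeBox S y := by
    rw [mem_removeBox h0 hy]
    obtain ⟨hy1, hyS⟩ := (mem_Yset h0).1 hy
    rintro (⟨-, h⟩ | ⟨h, -⟩) <;> omega
  rw [he, mem_removeBox h0 hz] at h1
  obtain ⟨hy1, hyS⟩ := (mem_Yset h0).1 hy
  obtain ⟨hz1, hzS⟩ := (mem_Yset h0).1 hz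
  by_contra hne
  exact h1 (Or.inl ⟨hy1, by omega⟩)

end Diamond

section WtLen
variable {S : Finset ℕ} {x y : ℕ}

lemma wt_addBox (h0 : 0 ∉ S) (hx : x ∈ Xset S) : wt (addBox S x) = wt S + 1 := by
  have hx1 := succ_not_mem hx
  rcases mem_Xset.1 hx with ⟨hxS, -⟩ | ⟨rfl, h1⟩
  · have hne : x ≠ 0 := fun h => h0 (h ▸ hxS)
    unfold addBox wt
    rw [if_neg hne, Finset.sum_insert (a := x + 1) (s := S.erase x) (by simp [Finset.mem_erase, hx1])]
    have := Finset.sum_erase_add S (fun a => a) hxS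
    omega
  · unfold addBox wt
    rw [if_pos rfl, Finset.sum_insert h1]
    omega

lemma len_addBox (h0 : 0 ∉ S) (hx : x ∈ Xset S) :
    len (addBox S x) = if x = 0 then len S + 1 else len S := by
  have hx1 := succ_not_mem hx
  rcases mem_Xset.1 hx with ⟨hxS, -⟩ | ⟨rfl, h1⟩
  · have hne : x ≠ 0 := fun h => h0 (h ▸ hxS)
    unfold addBox len
    rw [if_neg hne, if_neg hne, Finset.card_insert_of_notMem (a := x + 1) (s := S.erase x) (by simp [Finset.mem_erase, hx1]),
      Finset.card_erase_of_mem hxS]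
    have := Finset.card_pos.2 ⟨x, hxS⟩
    omega
  · unfold addBox len
    rw [if_pos rfl, if_pos rfl, Finset.card_insert_of_notMem h1]

lemma wt_removeBox (h0 : 0 ∉ S) (hy : y ∈ Yset S) : wt (removeBox S y) + 1 = wt S := by
  obtain ⟨hy1, hyS⟩ := (mem_Yset h0).1 hy
  by_cases hy0 : y = 0
  · subst hy0
    simp only [Nat.zero_add] at hy1
    unfold removeBox wt
    rw [if_pos rfl]
    have := Finset.sum_erase_add S (fun a => a) hy1
    omega
  · unfold removeBox wt
    rw [if_neg hy0, Finset.sum_insert (a := y) (s := S.erase (y + 1)) (by simp [Finset.mem_erase, hyS])]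
    have := Finset.sum_erase_add S (fun a => a) hy1
    omega

lemma kappa_eq (h0 : 0 ∉ S) (hy : y ∈ Yset S) :
    (if len (removeBox S y) = len S then 2 else 1) = (if y = 0 then 1 else 2 : ℕ) := by
  obtain ⟨hy1, hyS⟩ := (mem_Yset h0).1 hy
  by_cases hy0 : y = 0
  · subst hy0
    unfold removeBox len
    rw [if_pos rfl, if_pos rfl, Finset.card_erase_of_mem hy1]
    have := Finset.card_pos.2 ⟨1, hy1⟩
    rw [if_neg (by omega)]
  · unfold removeBox len
    rw [if_neg hy0, if_neg hy0, Finset.card_insert_of_notMem (a := y) (s := S.erase (y + 1)) (by simp [Finset.mem_erase, hyS]),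
      Finset.card_erase_of_mem hy1]
    have := Finset.card_pos.2 ⟨y + 1, hy1⟩
    rw [if_pos (by omega)]

end WtLen

noncomputable def wfun (t : ℕ) : ℝ := if t = 0 then 1 else 2

lemma cc_zero : cc 0 = 0 := by simp [cc]

lemma telescope (S : Finset ℕ) (h0 : 0 ∉ S) (f : ℕ → ℝ) :
    ∑ x ∈ S.filter (fun a => a + 1 ∉ S), f x
      = ∑ p ∈ S.filter (fun a => a - 1 ∉ S), f (p - 1)
        + ∑ a ∈ S, (f a - f (a - 1)) := by
  have e1 := Finset.sum_filter_add_sum_filter_not S (fun a => a + 1 ∉ S) f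
  have e2 := Finset.sum_filter_add_sum_filter_not S (fun a => a - 1 ∉ S)
    (fun a => f (a - 1))
  have e3 : ∑ a ∈ S.filter (fun a => ¬(a - 1 ∉ S)), f (a - 1)
      = ∑ b ∈ S.filter (fun a => ¬(a + 1 ∉ S)), f b := by
    apply Finset.sum_nbij' (fun a => a - 1) (fun b => b + 1)
    · intro a ha
      simp only [Finset.mem_filter, not_not] at ha ⊢
      have : a ≠ 0 := fun h => h0 (h ▸ ha.1)
      refine ⟨ha.2, ?_⟩
      rw [show a - 1 + 1 = a by omega]
      exact ha.1
    · intro b hb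
      simp only [Finset.mem_filter, not_not] at hb ⊢
      exact ⟨hb.2, by simpa using hb.1⟩
    · intro a ha
      simp only [Finset.mem_filter, not_not] at ha
      have : a ≠ 0 := fun h => h0 (h ▸ ha.1)
      omega
    · intro b hb; omega
    · intro a ha; rfl
  have e4 : ∑ a ∈ S, (f a - f (a - 1)) = ∑ a ∈ S, f a - ∑ a ∈ S, f (a - 1) :=
    Finset.sum_sub_distrib _ _
  linarith [e1, e2, e3, e4]

lemma sum_Yset (S : Finset ℕ) (h0 : 0 ∉ S) (g : ℕ → ℝ) :
    ∑ y ∈ Yset S, g y = ∑ p ∈ S.filter (fun a => a - 1 ∉ S), g (p - 1) := by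
  unfold Yset
  rw [Finset.sum_image]
  intro a ha b hb hab
  simp only [Finset.mem_coe, Finset.mem_filter] at ha hb
  have : a ≠ 0 := fun h => h0 (h ▸ ha.1)
  have : b ≠ 0 := fun h => h0 (h ▸ hb.1)
  simp only at hab
  omega

lemma AB_identity (S : Finset ℕ) (h0 : 0 ∉ S) (α : ℝ) :
    ∑ x ∈ Xset S, (cc x + α) * wfun x
      = (∑ y ∈ Yset S, (cc y + α) * wfun y) + 4 * (wt S : ℝ) + α := by
  set f : ℕ → ℝ := fun t => 2 * (cc t + α) with hf
  -- Step A
  have stepA : ∑ x ∈ Xset S, (cc x + α) * wfun x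
      = ∑ x ∈ S.filter (fun a => a + 1 ∉ S), f x + (if 1 ∉ S then α else 0) := by
    unfold Xset
    by_cases h1 : 1 ∈ S
    · rw [if_neg (by simpa using h1), Finset.union_empty, if_neg (by simpa using h1)]
      rw [add_zero]
      apply Finset.sum_congr rfl
      intro x hx
      simp only [Finset.mem_filter] at hx
      have : x ≠ 0 := fun h => h0 (h ▸ hx.1)
      simp [wfun, this, hf]; ring
    · rw [if_pos h1, if_pos h1]
      rw [Finset.sum_union (by
        simp only [Finset.disjoint_singleton_right, Finset.mem_filter]
        exact fun hc => h0 hc.1)]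
      rw [Finset.sum_singleton]
      have h00 : (cc 0 + α) * wfun 0 = α := by norm_num [cc_zero, wfun]
      rw [h00]
      congr 1
      apply Finset.sum_congr rfl
      intro x hx
      simp only [Finset.mem_filter] at hx
      have : x ≠ 0 := fun h => h0 (h ▸ hx.1)
      simp [wfun, this, hf]; ring
  -- Step B
  have stepB : ∑ y ∈ Yset S, (cc y + α) * wfun y
      = ∑ p ∈ S.filter (fun a => a - 1 ∉ S), f (p - 1) - (if 1 ∈ S then α else 0) := by
    rw [sum_Yset S h0 (fun y => (cc y + α) * wfun y)]
    by_cases h1 : 1 ∈ S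
    · rw [if_pos h1]
      have h1f : 1 ∈ S.filter (fun a => a - 1 ∉ S) := by
        simp only [Finset.mem_filter]
        exact ⟨h1, by simpa using h0⟩
      rw [← Finset.sum_erase_add _ _ h1f, ← Finset.sum_erase_add _ (fun p => f (p-1)) h1f]
      have he : ∀ p ∈ (S.filter (fun a => a - 1 ∉ S)).erase 1,
          (cc (p-1) + α) * wfun (p-1) = f (p-1) := by
        intro p hp
        simp only [Finset.mem_erase, Finset.mem_filter] at hp
        have hp0 : p ≠ 0 := fun h => h0 (h ▸ hp.2.1)
        have : p - 1 ≠ 0 := by omega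
        simp [wfun, this, hf]; ring
      rw [Finset.sum_congr rfl he]
      have h00 : (cc (1 - 1) + α) * wfun (1 - 1) = α := by norm_num [cc_zero, wfun]
      have hf0 : f (1 - 1) = 2 * α := by norm_num [hf, cc_zero]
      rw [h00, hf0]
      ring
    · rw [if_neg h1, sub_zero]
      apply Finset.sum_congr rfl
      intro p hp
      simp only [Finset.mem_filter] at hp
      have hp0 : p ≠ 0 := fun h => h0 (h ▸ hp.1)
      have hp1 : p ≠ 1 := fun h => h1 (h ▸ hp.1)
      have : p - 1 ≠ 0 := by omega
      simp [wfun, this, hf]; ring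
  -- Step C
  have stepC : ∑ a ∈ S, (f a - f (a - 1)) = 4 * (wt S : ℝ) := by
    have : ∀ a ∈ S, f a - f (a - 1) = 4 * (a : ℝ) := by
      intro a ha
      have ha0 : a ≠ 0 := fun h => h0 (h ▸ ha)
      have hc : ((a - 1 : ℕ) : ℝ) = (a : ℝ) - 1 := by
        have : 1 ≤ a := by omega
        push_cast [this]; ring
      simp only [hf, cc, hc]
      ring
    rw [Finset.sum_congr rfl this, ← Finset.mul_sum]
    congr 1
    rw [wt, Nat.cast_sum]
  have tel := telescope S h0 f
  rw [stepA, stepB, tel, stepC]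
  by_cases h1 : 1 ∈ S
  · rw [if_neg (by simpa using h1), if_pos h1]; ring
  · rw [if_pos h1, if_neg h1]; ring

lemma swap_sum (S : Finset ℕ) (h0 : 0 ∉ S) (F G : ℕ → ℕ → ℝ)
    (hFG : ∀ x ∈ Xset S, ∀ z ∈ Yset (addBox S x), z ≠ x → F x z = G x z) :
    ∑ x ∈ Xset S, ∑ z ∈ (Yset (addBox S x)).erase x, F x z
      = ∑ z ∈ Yset S, ∑ x ∈ (Xset (removeBox S z)).erase z, G x z := by
  rw [Finset.sum_sigma', Finset.sum_sigma']
  apply Finset.sum_nbij' (fun p => (⟨p.2, p.1⟩ : Σ _ : ℕ, ℕ))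
    (fun p => (⟨p.2, p.1⟩ : Σ _ : ℕ, ℕ))
  · rintro ⟨x, z⟩ hp
    simp only [Finset.mem_sigma, Finset.mem_erase] at hp ⊢
    obtain ⟨hx, hzx, hz⟩ := hp
    obtain ⟨h1, h2, -⟩ := diamond_fwd h0 hx hz hzx
    refine ⟨h1, ?_, h2⟩
    intro hxz
    exact hzx hxz.symm
  · rintro ⟨z, x⟩ hp
    simp only [Finset.mem_sigma, Finset.mem_erase] at hp ⊢
    obtain ⟨hz, hxz, hx⟩ := hp
    obtain ⟨h1, h2⟩ := diamond_bwd h0 hz hx hxz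
    exact ⟨h1, fun hzx => hxz hzx.symm, h2⟩
  · rintro ⟨x, z⟩ _; rfl
  · rintro ⟨z, x⟩ _; rfl
  · rintro ⟨x, z⟩ hp
    simp only [Finset.mem_sigma, Finset.mem_erase] at hp
    exact hFG x hp.1 z hp.2.2 hp.2.1
/-- **The combinatorial identity for the path-counting function `h(μ,λ)` of the Schur
graph** (used in the proof of Lemma 2.10). Here `h` is the (unique) function satisfying
`h(μ,μ) = 1`, `h(μ,ν) = 0` when `|ν| ≤ |μ|` and `ν ≠ μ`, and the recursion
`h(μ,ν) = ∑_{ρ ∶ ν = ρ + box} h(μ,ρ) κ(ρ,ν)` when `|ν| > |μ|` (the partitions `ρ` from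
which `ν` is obtained by adding one box are exactly the `ν − □(y)`, `y ∈ Y(ν)`, and
`κ(ρ,ν) = 2` if `ℓ(ν) = ℓ(ρ)`, `κ(ρ,ν) = 1` if `ℓ(ν) = ℓ(ρ)+1`).
For all real `α` and strict partitions `μ, λ` with `|μ| = k ≤ n = |λ|`:
`∑_{x∈X(λ)} (x(x+1)+α) h(μ, λ+□(x))
  = 2(n+k+α/2)(n−k+1) h(μ,λ) + ∑_{y∈Y(μ)} (y(y+1)+α) h(μ−□(y), λ)`. -/
theorem pathcount_identity (α : ℝ) (h : Finset ℕ → Finset ℕ → ℕ)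
    (h_refl : ∀ μ : Finset ℕ, IsStrictPartition μ → h μ μ = 1)
    (h_zero : ∀ μ ν : Finset ℕ, IsStrictPartition μ → IsStrictPartition ν →
      wt ν ≤ wt μ → ν ≠ μ → h μ ν = 0)
    (h_rec : ∀ μ ν : Finset ℕ, IsStrictPartition μ → IsStrictPartition ν →
      wt μ < wt ν →
      h μ ν = ∑ y ∈ Yset ν,
        h μ (removeBox ν y) * (if len (removeBox ν y) = len ν then 2 else 1))
    (μ lam : Finset ℕ) (hμ : IsStrictPartition μ) (hlam : IsStrictPartition lam)
    (k n : ℕ) (hk : wt μ = k) (hn : wt lam = n) (hkn : k ≤ n) :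
    ∑ x ∈ Xset lam, (cc x + α) * (h μ (addBox lam x) : ℝ) =
      2 * ((n : ℝ) + k + α / 2) * ((n : ℝ) - k + 1) * (h μ lam : ℝ) +
        ∑ y ∈ Yset μ, (cc y + α) * (h (removeBox μ y) lam : ℝ) := by
  subst hk; subst hn
  have hrecR : ∀ (ρ ν : Finset ℕ), IsStrictPartition ρ → IsStrictPartition ν →
      wt ρ < wt ν → (h ρ ν : ℝ) = ∑ z ∈ Yset ν, (h ρ (removeBox ν z) : ℝ) * wfun z := by
    intro ρ ν hρ hν hlt
    rw [h_rec ρ ν hρ hν hlt]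
    have e : ∀ z ∈ Yset ν, h ρ (removeBox ν z) * (if len (removeBox ν z) = len ν then 2 else 1)
        = h ρ (removeBox ν z) * (if z = 0 then 1 else 2) := by
      intro z hz
      rw [kappa_eq hν hz]
    rw [Finset.sum_congr rfl e]
    push_cast
    apply Finset.sum_congr rfl
    intro z hz
    unfold wfun
    split_ifs <;> norm_num
  have hsplit : ∀ lam, IsStrictPartition lam → wt μ ≤ wt lam → ∀ x ∈ Xset lam,
      (h μ (addBox lam x) : ℝ)
        = (h μ lam : ℝ) * wfun x
          + ∑ z ∈ (Yset (addBox lam x)).erase x,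
              (h μ (removeBox (addBox lam x) z) : ℝ) * wfun z := by
    intro lam hl hwt x hx
    rw [hrecR μ (addBox lam x) hμ (strict_addBox hl hx)
      (by rw [wt_addBox hl hx]; omega)]
    rw [← Finset.sum_erase_add _ _ (mem_Yset_addBox hl hx), removeBox_addBox hl hx]
    ring
  have key : ∀ d : ℕ, ∀ lam, IsStrictPartition lam → wt lam = wt μ + d →
      ∑ x ∈ Xset lam, (cc x + α) * (h μ (addBox lam x) : ℝ)
        = 2 * ((wt lam : ℝ) + (wt μ : ℝ) + α / 2) * ((wt lam : ℝ) - (wt μ : ℝ) + 1)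
            * (h μ lam : ℝ)
          + ∑ y ∈ Yset μ, (cc y + α) * (h (removeBox μ y) lam : ℝ) := by
    intro d
    induction d with
    | zero =>
      intro lam hl hwt
      rw [Nat.add_zero] at hwt
      by_cases he : lam = μ
      · subst he
        have hx1 : ∀ x ∈ Xset lam, (h lam (addBox lam x) : ℝ) = wfun x := by
          intro x hx
          rw [hsplit lam hl le_rfl x hx, h_refl lam hl]
          have hz0 : ∀ z ∈ (Yset (addBox lam x)).erase x,
              (h lam (removeBox (addBox lam x) z) : ℝ) * wfun z = 0 := by
            intro z hz
            rw [Finset.mem_erase] at hz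
            obtain ⟨hzx, hzY⟩ := hz
            obtain ⟨hzY', hxX', heq⟩ := diamond_fwd hl hx hzY hzx
            rw [heq]
            have hTs := strict_removeBox hl hzY'
            have hAs := strict_addBox hTs hxX'
            have hwt' : wt (addBox (removeBox lam z) x) ≤ wt lam := by
              rw [wt_addBox hTs hxX']
              have := wt_removeBox hl hzY'
              omega
            have hne : addBox (removeBox lam z) x ≠ lam := by
              intro hc
              apply hzx
              symm
              apply addBox_inj hTs hxX' (mem_Xset_removeBox hl hzY')
              rw [hc, addBox_removeBox hl hzY']
            rw [h_zero lam _ hl hAs hwt' hne]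
            simp
          rw [Finset.sum_congr rfl hz0, Finset.sum_const_zero]
          push_cast
          ring
        have step1 : ∑ x ∈ Xset lam, (cc x + α) * (h lam (addBox lam x) : ℝ)
            = ∑ x ∈ Xset lam, (cc x + α) * wfun x :=
          Finset.sum_congr rfl (fun x hx => by rw [hx1 x hx])
        rw [step1]
        have hy1 : ∀ y ∈ Yset lam, (h (removeBox lam y) lam : ℝ) = wfun y := by
          intro y hy
          rw [hrecR (removeBox lam y) lam (strict_removeBox hl hy) hl
            (by have := wt_removeBox hl hy; omega)]
          rw [← Finset.sum_erase_add _ _ hy]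
          have hz0 : ∀ z ∈ (Yset lam).erase y,
              (h (removeBox lam y) (removeBox lam z) : ℝ) * wfun z = 0 := by
            intro z hz
            rw [Finset.mem_erase] at hz
            have hne : removeBox lam z ≠ removeBox lam y :=
              fun hc => hz.1 (removeBox_inj hl hz.2 hy hc)
            have hwe : wt (removeBox lam z) ≤ wt (removeBox lam y) := by
              have := wt_removeBox hl hy
              have := wt_removeBox hl hz.2
              omega
            rw [h_zero _ _ (strict_removeBox hl hy) (strict_removeBox hl hz.2) hwe hne]
            simp
          rw [Finset.sum_congr rfl hz0, Finset.sum_const_zero,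
            h_refl _ (strict_removeBox hl hy)]
          push_cast
          ring
        have step2 : ∑ y ∈ Yset lam, (cc y + α) * (h (removeBox lam y) lam : ℝ)
            = ∑ y ∈ Yset lam, (cc y + α) * wfun y :=
          Finset.sum_congr rfl (fun y hy => by rw [hy1 y hy])
        rw [step2, h_refl lam hl, AB_identity lam hl α]
        push_cast
        ring
      · have hl0 : (h μ lam : ℝ) = 0 := by
          rw [h_zero μ lam hμ hl (le_of_eq hwt) he]
          norm_num
        have step1 : ∑ x ∈ Xset lam, (cc x + α) * (h μ (addBox lam x) : ℝ)
            = ∑ x ∈ Xset lam, (cc x + α) * ((h μ lam : ℝ) * wfun x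
              + ∑ z ∈ (Yset (addBox lam x)).erase x,
                  (h μ (removeBox (addBox lam x) z) : ℝ) * wfun z) :=
          Finset.sum_congr rfl (fun x hx => by
            rw [hsplit lam hl (le_of_eq hwt.symm) x hx])
        rw [step1]
        simp only [mul_add]
        rw [Finset.sum_add_distrib]
        have hS1 : ∑ x ∈ Xset lam, (cc x + α) * ((h μ lam : ℝ) * wfun x) = 0 := by
          rw [hl0]; simp
        rw [hS1, zero_add]
        have hpush : ∑ x ∈ Xset lam, (cc x + α) * (∑ z ∈ (Yset (addBox lam x)).erase x,
              (h μ (removeBox (addBox lam x) z) : ℝ) * wfun z)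
            = ∑ x ∈ Xset lam, ∑ z ∈ (Yset (addBox lam x)).erase x,
                (cc x + α) * ((h μ (removeBox (addBox lam x) z) : ℝ) * wfun z) :=
          Finset.sum_congr rfl (fun x hx => by rw [Finset.mul_sum])
        rw [hpush]
        have hsw : (∑ x ∈ Xset lam, ∑ z ∈ (Yset (addBox lam x)).erase x,
              (cc x + α) * ((h μ (removeBox (addBox lam x) z) : ℝ) * wfun z))
            = ∑ z ∈ Yset lam, ∑ x ∈ (Xset (removeBox lam z)).erase z,
                (cc x + α) * ((h μ (addBox (removeBox lam z) x) : ℝ) * wfun z) :=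
          swap_sum lam hl _ _ (fun x hx z hz hne => by
            rw [(diamond_fwd hl hx hz hne).2.2])
        rw [hsw]
        have hinner : ∀ z ∈ Yset lam,
            ∑ x ∈ (Xset (removeBox lam z)).erase z,
              (cc x + α) * ((h μ (addBox (removeBox lam z) x) : ℝ) * wfun z)
            = ∑ y ∈ Yset μ, (cc y + α)
                * ((h (removeBox μ y) (removeBox lam z) : ℝ) * wfun z) := by
          intro z hz
          have hTs := strict_removeBox hl hz
          have haz := addBox_removeBox hl hz
          have hTwt : wt (removeBox lam z) + 1 = wt lam := wt_removeBox hl hz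
          have hval1 : ∀ x ∈ (Xset (removeBox lam z)).erase z,
              (cc x + α) * ((h μ (addBox (removeBox lam z) x) : ℝ) * wfun z)
              = if addBox (removeBox lam z) x = μ then (cc x + α) * wfun z else 0 := by
            intro x hx
            rw [Finset.mem_erase] at hx
            by_cases hc : addBox (removeBox lam z) x = μ
            · rw [if_pos hc, hc, h_refl μ hμ]
              push_cast; ring
            · rw [if_neg hc, h_zero μ _ hμ (strict_addBox hTs hx.2)
                (by rw [wt_addBox hTs hx.2]; omega) hc]
              push_cast; ring
          have hval2 : ∀ y ∈ Yset μ,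
              (cc y + α) * ((h (removeBox μ y) (removeBox lam z) : ℝ) * wfun z)
              = if removeBox lam z = removeBox μ y then (cc y + α) * wfun z else 0 := by
            intro y hy
            by_cases hc : removeBox lam z = removeBox μ y
            · rw [if_pos hc, hc, h_refl _ (strict_removeBox hμ hy)]
              push_cast; ring
            · rw [if_neg hc, h_zero _ _ (strict_removeBox hμ hy) hTs
                (by have := wt_removeBox hμ hy; omega) hc]
              push_cast; ring
          rw [Finset.sum_congr rfl hval1, Finset.sum_congr rfl hval2]
          rw [← Finset.sum_filter, ← Finset.sum_filter]
          congr 1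
          ext w
          simp only [Finset.mem_filter, Finset.mem_erase]
          constructor
          · rintro ⟨⟨hwz, hwX⟩, hadd⟩
            refine ⟨?_, ?_⟩
            · rw [← hadd]; exact mem_Yset_addBox hTs hwX
            · rw [← hadd, removeBox_addBox hTs hwX]
          · rintro ⟨hwY, hrm⟩
            have hwX : w ∈ Xset (removeBox lam z) := by
              rw [hrm]; exact mem_Xset_removeBox hμ hwY
            have hadd : addBox (removeBox lam z) w = μ := by
              rw [hrm, addBox_removeBox hμ hwY]
            refine ⟨⟨?_, hwX⟩, hadd⟩
            intro hwz
            subst hwz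
            exact he (by rw [← haz, hadd])
        rw [Finset.sum_congr rfl hinner, Finset.sum_comm]
        have hfin : ∀ y ∈ Yset μ, ∑ z ∈ Yset lam,
            (cc y + α) * ((h (removeBox μ y) (removeBox lam z) : ℝ) * wfun z)
            = (cc y + α) * (h (removeBox μ y) lam : ℝ) := by
          intro y hy
          rw [← Finset.mul_sum, ← hrecR (removeBox μ y) lam (strict_removeBox hμ hy) hl
            (by have := wt_removeBox hμ hy; omega)]
        rw [Finset.sum_congr rfl hfin, hl0]
        ring
    | succ d ih =>
      intro lam hl hwt
      have hklt : wt μ < wt lam := by omega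
      have step1 : ∑ x ∈ Xset lam, (cc x + α) * (h μ (addBox lam x) : ℝ)
          = ∑ x ∈ Xset lam, (cc x + α) * ((h μ lam : ℝ) * wfun x
            + ∑ z ∈ (Yset (addBox lam x)).erase x,
                (h μ (removeBox (addBox lam x) z) : ℝ) * wfun z) :=
        Finset.sum_congr rfl (fun x hx => by
          rw [hsplit lam hl (le_of_lt hklt) x hx])
      rw [step1]
      simp only [mul_add]
      rw [Finset.sum_add_distrib]
      have hpush : ∑ x ∈ Xset lam, (cc x + α) * (∑ z ∈ (Yset (addBox lam x)).erase x,
            (h μ (removeBox (addBox lam x) z) : ℝ) * wfun z)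
          = ∑ x ∈ Xset lam, ∑ z ∈ (Yset (addBox lam x)).erase x,
              (cc x + α) * ((h μ (removeBox (addBox lam x) z) : ℝ) * wfun z) :=
        Finset.sum_congr rfl (fun x hx => by rw [Finset.mul_sum])
      rw [hpush]
      have hsw : (∑ x ∈ Xset lam, ∑ z ∈ (Yset (addBox lam x)).erase x,
            (cc x + α) * ((h μ (removeBox (addBox lam x) z) : ℝ) * wfun z))
          = ∑ z ∈ Yset lam, ∑ x ∈ (Xset (removeBox lam z)).erase z,
              (cc x + α) * ((h μ (addBox (removeBox lam z) x) : ℝ) * wfun z) :=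
        swap_sum lam hl _ _ (fun x hx z hz hne => by
          rw [(diamond_fwd hl hx hz hne).2.2])
      rw [hsw]
      set C : ℝ := 2 * (((wt μ : ℝ) + (d : ℝ)) + (wt μ : ℝ) + α / 2)
          * (((wt μ : ℝ) + (d : ℝ)) - (wt μ : ℝ) + 1) with hC
      have hinner : ∀ z ∈ Yset lam,
          ∑ x ∈ (Xset (removeBox lam z)).erase z,
            (cc x + α) * ((h μ (addBox (removeBox lam z) x) : ℝ) * wfun z)
          = (C * (h μ (removeBox lam z) : ℝ)
             + ∑ y ∈ Yset μ, (cc y + α) * (h (removeBox μ y) (removeBox lam z) : ℝ)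
             - (cc z + α) * (h μ lam : ℝ)) * wfun z := by
        intro z hz
        have hTs := strict_removeBox hl hz
        have hzX := mem_Xset_removeBox hl hz
        have haz := addBox_removeBox hl hz
        have hTwt : wt (removeBox lam z) = wt μ + d := by
          have := wt_removeBox hl hz; omega
        have hIH := ih (removeBox lam z) hTs hTwt
        have hcast : (wt (removeBox lam z) : ℝ) = (wt μ : ℝ) + (d : ℝ) := by
          rw [hTwt]; push_cast; ring
        rw [hcast] at hIH
        have hsplit2 : ∑ x ∈ (Xset (removeBox lam z)).erase z,
            (cc x + α) * ((h μ (addBox (removeBox lam z) x) : ℝ) * wfun z)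
            = (∑ x ∈ Xset (removeBox lam z),
                (cc x + α) * ((h μ (addBox (removeBox lam z) x) : ℝ) * wfun z))
              - (cc z + α) * ((h μ (addBox (removeBox lam z) z) : ℝ) * wfun z) := by
          rw [← Finset.sum_erase_add _ _ hzX]; ring
        rw [hsplit2, haz]
        have hmul : ∑ x ∈ Xset (removeBox lam z),
            (cc x + α) * ((h μ (addBox (removeBox lam z) x) : ℝ) * wfun z)
            = (∑ x ∈ Xset (removeBox lam z),
                (cc x + α) * (h μ (addBox (removeBox lam z) x) : ℝ)) * wfun z := by
          rw [Finset.sum_mul]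
          exact Finset.sum_congr rfl (fun x _ => by ring)
        rw [hmul, hIH, hC]
        ring
      rw [Finset.sum_congr rfl hinner]
      have e1 : ∀ z ∈ Yset lam,
          (C * (h μ (removeBox lam z) : ℝ)
            + ∑ y ∈ Yset μ, (cc y + α) * (h (removeBox μ y) (removeBox lam z) : ℝ)
            - (cc z + α) * (h μ lam : ℝ)) * wfun z
          = C * ((h μ (removeBox lam z) : ℝ) * wfun z)
            + (∑ y ∈ Yset μ, (cc y + α)
                * ((h (removeBox μ y) (removeBox lam z) : ℝ) * wfun z))
            - ((cc z + α) * wfun z) * (h μ lam : ℝ) := by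
        intro z hz
        have : (∑ y ∈ Yset μ, (cc y + α)
              * ((h (removeBox μ y) (removeBox lam z) : ℝ) * wfun z))
            = (∑ y ∈ Yset μ, (cc y + α) * (h (removeBox μ y) (removeBox lam z) : ℝ))
              * wfun z := by
          rw [Finset.sum_mul]
          exact Finset.sum_congr rfl (fun y _ => by ring)
        rw [this]
        ring
      rw [Finset.sum_congr rfl e1, Finset.sum_sub_distrib, Finset.sum_add_distrib,
        ← Finset.mul_sum, ← Finset.sum_mul]
      rw [← hrecR μ lam hμ hl hklt, Finset.sum_comm]
      have hfin : ∀ y ∈ Yset μ, ∑ z ∈ Yset lam,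
          (cc y + α) * ((h (removeBox μ y) (removeBox lam z) : ℝ) * wfun z)
          = (cc y + α) * (h (removeBox μ y) lam : ℝ) := by
        intro y hy
        rw [← Finset.mul_sum, ← hrecR (removeBox μ y) lam (strict_removeBox hμ hy) hl
          (by have := wt_removeBox hμ hy; omega)]
      rw [Finset.sum_congr rfl hfin]
      have hS1 : ∑ x ∈ Xset lam, (cc x + α) * ((h μ lam : ℝ) * wfun x)
          = (∑ x ∈ Xset lam, (cc x + α) * wfun x) * (h μ lam : ℝ) := by
        rw [Finset.sum_mul]
        exact Finset.sum_congr rfl (fun x _ => by ring)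
      rw [hS1, AB_identity lam hl α]
      have hcast2 : (wt lam : ℝ) = (wt μ : ℝ) + (d : ℝ) + 1 := by
        rw [hwt]; push_cast; ring
      rw [hcast2, hC]
      ring
  have hd : wt lam = wt μ + (wt lam - wt μ) := by omega
  exact key (wt lam - wt μ) lam hlam hd
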